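/- arXiv:1711.11448 — 3 statements merged into one kernel-verified Lean document; each statement's English description precedes it below -/
import Mathlib

section
/- Let C_n^φ be a T-gain cycle of order n, with n even and cycle gain φ(C_n) ≠ (-1)^{n/2} (Type B). Then A(C_n^φ) is nonsingular, i.e., rank(A(C_n^φ)) = n. -/
open Matrix
open scoped Classical

structure GainGraph (V : Type*) [Fintype V] [DecidableEq V] where
  G : SimpleGraph V
  gain : V → V → ℂ
  gain_unit : ∀ i j, G.Adj i j → ‖gain i j‖ = 1
  gain_conj : ∀ i j, gain j i = starRingEnd ℂ (gain i j)

variable {V : Type*} [Fintype V] [DecidableEq V]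

noncomputable def GainGraph.A (Φ : GainGraph V) : Matrix V V ℂ :=
  fun i j => if Φ.G.Adj i j then Φ.gain i j else 0

theorem GainGraph.isHermitian (Φ : GainGraph V) : Φ.A.IsHermitian := by
  unfold Matrix.IsHermitian
  ext i j
  by_cases h : Φ.G.Adj i j
  · have h' : Φ.G.Adj j i := h.symm
    simp [Matrix.conjTranspose_apply, GainGraph.A, h, h', ← Φ.gain_conj]
  · have h' : ¬ Φ.G.Adj j i := fun hh => h hh.symm
    simp [Matrix.conjTranspose_apply, GainGraph.A, h, h']

noncomputable def GainGraph.iPos (Φ : GainGraph V) : ℕ :=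
  Nat.card {i // 0 < Φ.isHermitian.eigenvalues i}

noncomputable def GainGraph.iNeg (Φ : GainGraph V) : ℕ :=
  Nat.card {i // Φ.isHermitian.eigenvalues i < 0}

noncomputable def GainGraph.nullity (Φ : GainGraph V) : ℕ :=
  Nat.card {i // Φ.isHermitian.eigenvalues i = 0}

noncomputable def grank (G : SimpleGraph V) : ℕ := (G.adjMatrix ℂ).rank

noncomputable def theta (G : SimpleGraph V) : ℤ :=
  (G.edgeSet.ncard : ℤ) - (Fintype.card V : ℤ) + (Nat.card G.ConnectedComponent : ℤ)

def GainGraph.induce (Φ : GainGraph V) (S : Set V) [Fintype S] : GainGraph S where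
  G := Φ.G.induce S
  gain := fun i j => Φ.gain i j
  gain_unit := fun i j h => Φ.gain_unit i j (by simpa using h)
  gain_conj := fun i j => Φ.gain_conj i j

noncomputable def GainGraph.delete (Φ : GainGraph V) (v : V) : GainGraph {u : V | u ≠ v} :=
  Φ.induce {u : V | u ≠ v}

noncomputable def GainGraph.walkGain (Φ : GainGraph V) {u v : V} (w : Φ.G.Walk u v) : ℂ :=
  (w.darts.map (fun d => Φ.gain d.toProd.1 d.toProd.2)).prod

def OnCycle (G : SimpleGraph V) (v : V) : Prop :=
  ∃ (w : V) (c : G.Walk w w), c.IsCycle ∧ v ∈ c.support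

def CyclesVertexDisjoint (G : SimpleGraph V) : Prop :=
  ∀ ⦃u v : V⦄ (c : G.Walk u u) (d : G.Walk v v), c.IsCycle → d.IsCycle →
    {e : Sym2 V | e ∈ c.edges} ≠ {e : Sym2 V | e ∈ d.edges} →
    Disjoint {x : V | x ∈ c.support} {x : V | x ∈ d.support}

def IsCycleSet (G : SimpleGraph V) (s : Set (Sym2 V)) : Prop :=
  ∃ (v : V) (c : G.Walk v v), c.IsCycle ∧ s = {e : Sym2 V | e ∈ c.edges}

def GainGraph.LowerOptimal (Φ : GainGraph V) : Prop :=
  (Φ.A.rank : ℤ) = (grank Φ.G : ℤ) - 2 * theta Φ.G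

def GainGraph.UpperOptimal (Φ : GainGraph V) : Prop :=
  (Φ.A.rank : ℤ) = (grank Φ.G : ℤ) + 2 * theta Φ.G

namespace CycleAux
variable {W : Type*} {G : SimpleGraph W}

lemma getD_cons_of_pos {α : Type*} (a : α) (l : List α) (d : α) {k : ℕ} (hk : 1 ≤ k) :
    (a :: l).getD k d = l.getD (k - 1) d := by
  obtain ⟨k', rfl⟩ : ∃ k', k = k' + 1 := ⟨k - 1, by omega⟩
  simp

lemma support_getD {u v : W} (p : G.Walk u v) (i : ℕ) :
    p.support.getD i v = p.getVert i := by
  induction p generalizing i with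
  | nil => cases i <;> simp [SimpleGraph.Walk.getVert]
  | cons h q ih =>
      cases i with
      | zero => simp [SimpleGraph.Walk.getVert]
      | succ i => simpa [SimpleGraph.Walk.getVert_cons_succ] using ih i

lemma mem_edges_iff {u v : W} (p : G.Walk u v) (e : Sym2 W) :
    e ∈ p.edges ↔ ∃ i < p.length, e = s(p.getVert i, p.getVert (i + 1)) := by
  induction p with
  | nil => simp
  | cons h q ih =>
      simp only [SimpleGraph.Walk.edges_cons, List.mem_cons, ih,
        SimpleGraph.Walk.length_cons]
      constructor
      · rintro (rfl | ⟨i, hi, rfl⟩)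
        · exact ⟨0, by omega, by simp [SimpleGraph.Walk.getVert_cons_succ,
            SimpleGraph.Walk.getVert_zero]⟩
        · exact ⟨i + 1, by omega, by simp [SimpleGraph.Walk.getVert_cons_succ]⟩
      · rintro ⟨i, hi, rfl⟩
        cases i with
        | zero => left; simp [SimpleGraph.Walk.getVert_cons_succ,
            SimpleGraph.Walk.getVert_zero]
        | succ i =>
            right
            exact ⟨i, by omega, by simp [SimpleGraph.Walk.getVert_cons_succ]⟩

lemma getVert_injOn {u v : W} (p : G.Walk u v) (h : p.support.tail.Nodup) :
    ∀ i j, 1 ≤ i → i ≤ p.length → 1 ≤ j → j ≤ p.length →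
      p.getVert i = p.getVert j → i = j := by
  intro i j hi1 hi2 hj1 hj2 hij
  have hlen : p.support.tail.length = p.length := by
    have := SimpleGraph.Walk.length_support p
    simp [List.length_tail, this]
  have hget : ∀ k (_ : 1 ≤ k) (_ : k ≤ p.length),
      p.support.tail[k - 1]'(by omega) = p.getVert k := by
    intro k hk1 hk2
    have h1 : p.support.getD k v = p.getVert k := support_getD p k
    have h2 : p.support = u :: p.support.tail := by
      rw [← SimpleGraph.Walk.support_eq_cons]
    rw [h2] at h1
    have h3 : (u :: p.support.tail).getD k v = p.support.tail.getD (k - 1) v := by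
      obtain ⟨k', rfl⟩ : ∃ k', k = k' + 1 := ⟨k - 1, by omega⟩
      simp
    rw [h3, List.getD_eq_getElem _ _ (by omega)] at h1
    exact h1
  have e1 := hget i hi1 hi2
  have e2 := hget j hj1 hj2
  rw [← e1, ← e2] at hij
  have := (List.Nodup.getElem_inj_iff h).mp hij
  omega

lemma prod_range_two_mul (f : ℕ → ℂ) (m : ℕ) :
    ∏ i ∈ Finset.range (2 * m), f i =
      (∏ j ∈ Finset.range m, f (2 * j)) * ∏ j ∈ Finset.range m, f (2 * j + 1) := by
  induction m with
  | zero => simp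
  | succ m ih =>
      have h2 : 2 * (m + 1) = (2 * m + 1) + 1 := by ring
      rw [h2, Finset.prod_range_succ, Finset.prod_range_succ,
        Finset.prod_range_succ, Finset.prod_range_succ, ih]
      ring

end CycleAux

lemma GainGraph.walkGain_eq_prod (Φ : GainGraph V) {u v : V} (p : Φ.G.Walk u v) :
    Φ.walkGain p = ∏ i ∈ Finset.range p.length,
      Φ.gain (p.getVert i) (p.getVert (i + 1)) := by
  induction p with
  | nil => simp [GainGraph.walkGain]
  | cons h q ih =>
      rw [GainGraph.walkGain] at *
      simp only [SimpleGraph.Walk.darts_cons, List.map_cons, List.prod_cons,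
        SimpleGraph.Walk.length_cons]
      rw [Finset.prod_range_succ', ih]
      simp [SimpleGraph.Walk.getVert_cons_succ, SimpleGraph.Walk.getVert_zero,
        mul_comm]

theorem stmt8 (Φ : GainGraph V) (v : V) (c : Φ.G.Walk v v) (hc : c.IsCycle)
    (hspan : ∀ u, u ∈ c.support)
    (hedge : Φ.G.edgeSet = {e : Sym2 V | e ∈ c.edges})
    (hn : Even (Fintype.card V))
    (hgain : Φ.walkGain c ≠ (-1 : ℂ) ^ (Fintype.card V / 2)) :
    Φ.A.rank = Fintype.card V := by
  classical
  set n := c.length with hnlen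
  have h3 : 3 ≤ n := hc.three_le_length
  have hnd : c.support.tail.Nodup := hc.support_nodup
  have hlen_tail : c.support.tail.length = n := by
    have := SimpleGraph.Walk.length_support c
    simp [List.length_tail, this]
    exact hnlen.symm
  have hv_mem_tail : v ∈ c.support.tail := by
    have h1 : c.support.getD n v = c.getVert n := CycleAux.support_getD c n
    have h2 : c.support = v :: c.support.tail := by
      rw [← SimpleGraph.Walk.support_eq_cons]
    rw [h2] at h1
    have h3' : (v :: c.support.tail).getD n v = c.support.tail.getD (n - 1) v :=
      CycleAux.getD_cons_of_pos _ _ _ (by omega)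
    rw [h3', List.getD_eq_getElem _ _ (by omega)] at h1
    rw [SimpleGraph.Walk.getVert_length] at h1
    exact List.mem_iff_getElem.mpr ⟨n - 1, by omega, h1⟩
  have hmem_tail : ∀ u, u ∈ c.support.tail := by
    intro u
    have := hspan u
    rw [SimpleGraph.Walk.support_eq_cons] at this
    rcases List.mem_cons.mp this with rfl | h
    · exact hv_mem_tail
    · exact h
  have hcard : Fintype.card V = n := by
    have h1 : c.support.tail.toFinset = Finset.univ := by
      ext u; simp [hmem_tail u]
    have h2 : c.support.tail.toFinset.card = n := by
      rw [List.toFinset_card_of_nodup hnd, hlen_tail]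
    rw [← h2, h1, Finset.card_univ]
  have hinj0 : ∀ a, a < n → ∀ b, b < n → c.getVert a = c.getVert b → a = b := by
    have hI := CycleAux.getVert_injOn c hnd
    intro a ha b hb hab
    rcases Nat.eq_zero_or_pos a with rfl | ha1
    · rcases Nat.eq_zero_or_pos b with rfl | hb1
      · rfl
      · exfalso
        have hh : c.getVert n = c.getVert b := by
          rw [SimpleGraph.Walk.getVert_length, ← hab, SimpleGraph.Walk.getVert_zero]
        have := hI n b (by omega) (le_refl _) hb1 (by omega) hh
        omega
    · rcases Nat.eq_zero_or_pos b with rfl | hb1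
      · exfalso
        have hh : c.getVert a = c.getVert n := by
          rw [SimpleGraph.Walk.getVert_length, hab, SimpleGraph.Walk.getVert_zero]
        have := hI a n ha1 (by omega) (by omega) (le_refl _) hh
        omega
      · exact hI a b ha1 (by omega) hb1 (by omega) hab
  set vert : ℕ → V := fun i => c.getVert (i % n) with hvert
  have hvcong : ∀ {a b : ℕ}, a % n = b % n → vert a = vert b := by
    intro a b h; simp only [hvert, h]
  have hvert_le : ∀ i, i ≤ n → vert i = c.getVert i := by
    intro i hi
    rcases Nat.lt_or_ge i n with h | h
    · simp only [hvert, Nat.mod_eq_of_lt h]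
    · have : i = n := by omega
      subst this
      simp only [hvert, Nat.mod_self, SimpleGraph.Walk.getVert_zero]
      exact (SimpleGraph.Walk.getVert_length c).symm
  have hvsucc : ∀ i, vert (i + 1) = c.getVert (i % n + 1) := by
    intro i
    have h1 : (i + 1) % n = (i % n + 1) % n := by
      conv_lhs => rw [Nat.add_mod]
      rw [Nat.mod_eq_of_lt (show 1 < n by omega)]
    show c.getVert ((i + 1) % n) = _
    rw [h1]
    rcases Nat.lt_or_ge (i % n + 1) n with h | h
    · rw [Nat.mod_eq_of_lt h]
    · have he : i % n + 1 = n := by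
        have := Nat.mod_lt i (show 0 < n by omega); omega
      rw [he, Nat.mod_self, SimpleGraph.Walk.getVert_zero,
        SimpleGraph.Walk.getVert_length]
  have hvadj : ∀ i, Φ.G.Adj (vert i) (vert (i + 1)) := by
    intro i
    rw [hvsucc i]
    exact c.adj_getVert_succ (Nat.mod_lt _ (by omega))
  have hvper : ∀ i, vert (i + n) = vert i := by
    intro i; exact hvcong (Nat.add_mod_right i n)
  have hvinj : ∀ a b, vert a = vert b → a % n = b % n := by
    intro a b h
    exact hinj0 _ (Nat.mod_lt _ (by omega)) _ (Nat.mod_lt _ (by omega)) h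
  have hAdj : ∀ a b, Φ.G.Adj a b ↔ ∃ i < n, s(a, b) = s(vert i, vert (i + 1)) := by
    intro a b
    rw [← SimpleGraph.mem_edgeSet, hedge]
    simp only [Set.mem_setOf_eq, CycleAux.mem_edges_iff]
    constructor
    · rintro ⟨i, hi, he⟩
      exact ⟨i, hi, by rw [he, hvert_le i (by omega), hvsucc i, Nat.mod_eq_of_lt hi]⟩
    · rintro ⟨i, hi, he⟩
      exact ⟨i, hi, by rw [he, hvert_le i (by omega), hvsucc i, Nat.mod_eq_of_lt hi]⟩
  have hnbr : ∀ k (j : V), Φ.G.Adj (vert k) j →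
      j = vert (k + n - 1) ∨ j = vert (k + 1) := by
    intro k j hadj
    obtain ⟨i, hi, he⟩ := (hAdj _ _).mp hadj
    rw [Sym2.eq_iff] at he
    rcases he with ⟨h1, h2⟩ | ⟨h1, h2⟩
    · right
      have hki : k % n = i % n := hvinj _ _ h1
      rw [h2]
      exact (hvcong (Nat.ModEq.add_right 1 hki)).symm
    · left
      have hki : k % n = (i + 1) % n := hvinj _ _ h1
      rw [h2]
      refine (hvcong ?_).symm
      have h4 : (k + (n - 1)) % n = (i + 1 + (n - 1)) % n :=
        Nat.ModEq.add_right (n - 1) hki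
      have h5 : i + 1 + (n - 1) = i + n := by omega
      have h6 : k + n - 1 = k + (n - 1) := by omega
      rw [h6, h4, h5, Nat.add_mod_right]
  have hne : ∀ k, vert (k + n - 1) ≠ vert (k + 1) := by
    intro k h
    have h1 := hvinj _ _ h
    have h6 : k + n - 1 = (k + 1) + (n - 2) := by omega
    rw [h6] at h1
    have h2 : (n - 2) % n = 0 % n := Nat.ModEq.add_left_cancel' (k + 1) h1
    rw [Nat.mod_eq_of_lt (by omega), Nat.zero_mod] at h2
    omega
  -- gains along the cycle
  set g : ℕ → ℂ := fun k => Φ.gain (vert k) (vert (k + 1)) with hg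
  have hgabs : ∀ k, ‖g k‖ = 1 := fun k => Φ.gain_unit _ _ (hvadj k)
  have hg0 : ∀ k, g k ≠ 0 := by
    intro k h
    have := hgabs k
    rw [h] at this
    simp at this
  have hgconj : ∀ k, g k * (starRingEnd ℂ) (g k) = 1 := by
    intro k
    rw [Complex.mul_conj, Complex.normSq_eq_norm_sq, hgabs]
    norm_num
  have hgper : ∀ k, g (k + n) = g k := by
    intro k
    simp only [hg]
    rw [show k + n + 1 = (k + 1) + n by omega, hvper, hvper]
  -- the walk gain as a product
  obtain ⟨m, hm⟩ := hn
  have hnm : n = 2 * m := by omega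
  set P : ℂ := ∏ j ∈ Finset.range m, g (2 * j) with hP
  set Q : ℂ := ∏ j ∈ Finset.range m, g (2 * j + 1) with hQ
  have hP0 : P ≠ 0 := Finset.prod_ne_zero_iff.mpr fun j _ => hg0 _
  have hQ0 : Q ≠ 0 := Finset.prod_ne_zero_iff.mpr fun j _ => hg0 _
  have hPconj : P * (starRingEnd ℂ) P = 1 := by
    rw [hP, map_prod, ← Finset.prod_mul_distrib]
    exact Finset.prod_eq_one fun j _ => hgconj _
  have hQconj : Q * (starRingEnd ℂ) Q = 1 := by
    rw [hQ, map_prod, ← Finset.prod_mul_distrib]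
    exact Finset.prod_eq_one fun j _ => hgconj _
  have hφ : Φ.walkGain c = P * Q := by
    rw [Φ.walkGain_eq_prod c]
    have he : ∀ i ∈ Finset.range n,
        Φ.gain (c.getVert i) (c.getVert (i + 1)) = g i := by
      intro i hi
      rw [Finset.mem_range] at hi
      simp only [hg]
      rw [hvert_le i (by omega), hvert_le (i + 1) (by omega)]
    rw [← hnlen, Finset.prod_congr rfl he, hnm, CycleAux.prod_range_two_mul]
  have hexp : Fintype.card V / 2 = m := by omega
  rw [hexp] at hgain
  -- kernel is trivial
  have hker : ∀ x : V → ℂ, Φ.A.mulVec x = 0 → x = 0 := by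
    intro x hx
    set y : ℕ → ℂ := fun k => x (vert k) with hy
    have hyper : ∀ k, y (k + n) = y k := by
      intro k; simp only [hy, hvper]
    have hstep : ∀ k, (starRingEnd ℂ) (g k) * y k + g (k + 1) * y (k + 2) = 0 := by
      intro k
      have hu := congrFun hx (vert (k + 1))
      rw [Matrix.mulVec, dotProduct, Pi.zero_apply] at hu
      have ha : vert (k + 1 + n - 1) = vert k := by
        refine hvcong ?_
        rw [show k + 1 + n - 1 = k + n by omega, Nat.add_mod_right]
      have hab : vert k ≠ vert (k + 2) := by
        rw [← ha]
        exact hne (k + 1)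
      have hzero : ∀ j ∈ Finset.univ, j ∉ ({vert k, vert (k + 2)} : Finset V) →
          Φ.A (vert (k + 1)) j * x j = 0 := by
        intro j _ hj
        by_cases hadj : Φ.G.Adj (vert (k + 1)) j
        · exfalso
          rcases hnbr (k + 1) j hadj with h | h
          · exact hj (Finset.mem_insert.mpr (Or.inl (by rw [h, ha])))
          · exact hj (Finset.mem_insert.mpr (Or.inr (Finset.mem_singleton.mpr (by rw [h]))))
        · simp [GainGraph.A, hadj]
      have hsum := Finset.sum_subset (Finset.subset_univ ({vert k, vert (k + 2)} : Finset V)) hzero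
      rw [← hsum, Finset.sum_pair hab] at hu
      have hA1 : Φ.A (vert (k + 1)) (vert k) = (starRingEnd ℂ) (g k) := by
        rw [GainGraph.A, if_pos (hvadj k).symm, Φ.gain_conj]
      have hA2 : Φ.A (vert (k + 1)) (vert (k + 2)) = g (k + 1) := by
        rw [GainGraph.A, if_pos (hvadj (k + 1))]
      rw [hA1, hA2] at hu
      exact hu
    have hrec : ∀ k, y (k + 2) = -((starRingEnd ℂ) (g k) / g (k + 1)) * y k := by
      intro k
      have h := hstep k
      field_simp [hg0 (k + 1)]
      linear_combination h
    have hiter : ∀ m' k, y (k + 2 * m') =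
        (-1 : ℂ) ^ m' *
          (∏ j ∈ Finset.range m', (starRingEnd ℂ) (g (k + 2 * j)) / g (k + 2 * j + 1)) *
          y k := by
      intro m' k
      induction m' with
      | zero => simp
      | succ m' ih =>
          have h1 : k + 2 * (m' + 1) = (k + 2 * m') + 2 := by ring
          rw [h1, hrec (k + 2 * m'), ih, Finset.prod_range_succ]
          ring
    -- y 0 = 0
    have hy0 : y 0 = 0 := by
      by_contra h0
      have h1 := hiter m 0
      rw [show (0 : ℕ) + 2 * m = 0 + n by omega, hyper 0] at h1
      simp only [Nat.zero_add, zero_add] at h1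
      have h2 : (1 : ℂ) = (-1) ^ m *
          ∏ j ∈ Finset.range m, (starRingEnd ℂ) (g (2 * j)) / g (2 * j + 1) := by
        refine mul_right_cancel₀ h0 ?_
        rw [one_mul]
        exact h1
      have h3 : (∏ j ∈ Finset.range m, (starRingEnd ℂ) (g (2 * j)) / g (2 * j + 1))
          = (starRingEnd ℂ) P / Q := by
        rw [Finset.prod_div_distrib, hP, hQ, map_prod]
      rw [h3] at h2
      have h4 : Q = (-1 : ℂ) ^ m * (starRingEnd ℂ) P := by
        field_simp at h2
        linear_combination h2
      apply hgain
      rw [hφ, h4]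
      calc P * ((-1 : ℂ) ^ m * (starRingEnd ℂ) P)
          = (-1 : ℂ) ^ m * (P * (starRingEnd ℂ) P) := by ring
        _ = (-1 : ℂ) ^ m := by rw [hPconj, mul_one]
    -- y 1 = 0
    have hy1 : y 1 = 0 := by
      by_contra h0
      have h1 := hiter m 1
      rw [show (1 : ℕ) + 2 * m = 1 + n by omega, hyper 1] at h1
      have h2 : (1 : ℂ) = (-1) ^ m *
          ∏ j ∈ Finset.range m, (starRingEnd ℂ) (g (1 + 2 * j)) / g (1 + 2 * j + 1) := by
        refine mul_right_cancel₀ h0 ?_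
        rw [one_mul]
        exact h1
      have hQ' : (∏ j ∈ Finset.range m, (starRingEnd ℂ) (g (1 + 2 * j))) =
          (starRingEnd ℂ) Q := by
        rw [hQ, map_prod]
        exact Finset.prod_congr rfl fun j _ => by rw [show 1 + 2 * j = 2 * j + 1 by ring]
      have hP' : (∏ j ∈ Finset.range m, g (1 + 2 * j + 1)) = P := by
        have e1 : ∏ j ∈ Finset.range (m + 1), g (2 * j) = P * g (2 * m) :=
          Finset.prod_range_succ _ _
        have e2 : ∏ j ∈ Finset.range (m + 1), g (2 * j) =
            (∏ j ∈ Finset.range m, g (1 + 2 * j + 1)) * g 0 := by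
          rw [Finset.prod_range_succ']
          congr 1
          exact Finset.prod_congr rfl fun j _ => congrArg g (by ring)
        have e3 : g (2 * m) = g 0 := by
          rw [show 2 * m = 0 + n by omega, hgper]
        rw [e3] at e1
        have := e2.symm.trans e1
        exact mul_right_cancel₀ (hg0 0) this
      have h3 : (∏ j ∈ Finset.range m, (starRingEnd ℂ) (g (1 + 2 * j)) / g (1 + 2 * j + 1))
          = (starRingEnd ℂ) Q / P := by
        rw [Finset.prod_div_distrib, hQ', hP']
      rw [h3] at h2
      have h4 : P = (-1 : ℂ) ^ m * (starRingEnd ℂ) Q := by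
        field_simp at h2
        linear_combination h2
      apply hgain
      rw [hφ, h4]
      calc (-1 : ℂ) ^ m * (starRingEnd ℂ) Q * Q
          = (-1 : ℂ) ^ m * (Q * (starRingEnd ℂ) Q) := by ring
        _ = (-1 : ℂ) ^ m := by rw [hQconj, mul_one]
    have hall : ∀ k, y k = 0 ∧ y (k + 1) = 0 := by
      intro k
      induction k with
      | zero => exact ⟨hy0, hy1⟩
      | succ k ih =>
          refine ⟨ih.2, ?_⟩
          rw [show k + 1 + 1 = k + 2 from rfl, hrec k, ih.1, mul_zero]
    funext u
    obtain ⟨i, hgi, hile⟩ := SimpleGraph.Walk.mem_support_iff_exists_getVert.mp (hspan u)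
    have : x u = y i := by
      rw [hy]
      simp only
      rw [hvert_le i hile, hgi]
    rw [Pi.zero_apply, this]
    exact (hall i).1
  -- conclude
  have hinj : Function.Injective Φ.A.mulVec := by
    have h1 : LinearMap.ker Φ.A.mulVecLin = ⊥ := by
      rw [LinearMap.ker_eq_bot']
      intro x hx
      exact hker x (by simpa using hx)
    have h2 := LinearMap.ker_eq_bot.mp h1
    exact h2
  exact Matrix.rank_of_isUnit Φ.A (Matrix.mulVec_injective_iff_isUnit.mp hinj)
end

section
/- Let G be a finite simple graph in which all cycles are pairwise vertex-disjoint. Then θ(G) equals the number of distinct cycles of G. -/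
open Matrix
open scoped Classical

variable {V : Type*} [Fintype V] [DecidableEq V]

section ThetaHelpers
open SimpleGraph

set_option linter.unusedSectionVars false

private lemma card_eq_succ_of_bij {α β : Type*} [Fintype α] [Fintype β] (a₀ : α)
    (f : {a : α // a ≠ a₀} → β) (hf : Function.Bijective f) :
    Fintype.card α = Fintype.card β + 1 := by
  have h1 : Fintype.card {a : α // a ≠ a₀} = Fintype.card β := Fintype.card_of_bijective hf
  have h2 : Fintype.card {a : α // ¬ a = a₀} =
      Fintype.card α - Fintype.card {a : α // a = a₀} := Fintype.card_subtype_compl _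
  rw [Fintype.card_subtype_eq] at h2
  have h3 : 1 ≤ Fintype.card α := Fintype.card_pos_iff.2 ⟨a₀⟩
  have h12 : Fintype.card {a : α // a ≠ a₀} = Fintype.card {a : α // ¬ a = a₀} :=
    Fintype.card_congr (Equiv.refl _)
  omega

private lemma reach_del {G : SimpleGraph V} {u v : V}
    (huv : (G.deleteEdges {s(u,v)}).Reachable u v) {a b : V} (p : G.Walk a b) :
    (G.deleteEdges {s(u,v)}).Reachable a b := by
  induction p with
  | nil => exact Reachable.refl _
  | @cons x y z h q ih =>
    refine Reachable.trans ?_ ih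
    by_cases he : s(x,y) = s(u,v)
    · rcases Sym2.eq_iff.mp he with ⟨rfl, rfl⟩ | ⟨rfl, rfl⟩
      · exact huv
      · exact huv.symm
    · exact Adj.reachable (by rw [deleteEdges_adj]; exact ⟨h, by simpa using he⟩)

private lemma reach_split {G : SimpleGraph V} (u v : V) {a b : V} (p : G.Walk a b) :
    (G.deleteEdges {s(u,v)}).Reachable a b ∨
    ((G.deleteEdges {s(u,v)}).Reachable a u ∧ (G.deleteEdges {s(u,v)}).Reachable v b) ∨
    ((G.deleteEdges {s(u,v)}).Reachable a v ∧ (G.deleteEdges {s(u,v)}).Reachable u b) := by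
  induction p with
  | nil => exact Or.inl (Reachable.refl _)
  | @cons x y z h q ih =>
    by_cases he : s(x,y) = s(u,v)
    · rcases Sym2.eq_iff.mp he with ⟨rfl, rfl⟩ | ⟨rfl, rfl⟩
      · rcases ih with h1 | ⟨h2a, h2b⟩ | ⟨h3a, h3b⟩
        · exact Or.inr (Or.inl ⟨Reachable.refl _, h1⟩)
        · exact Or.inl (h2a.symm.trans h2b)
        · exact Or.inl h3b
      · rcases ih with h1 | ⟨h2a, h2b⟩ | ⟨h3a, h3b⟩
        · exact Or.inr (Or.inr ⟨Reachable.refl _, h1⟩)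
        · exact Or.inl h2b
        · exact Or.inl (h3a.symm.trans h3b)
    · have h' : (G.deleteEdges {s(u,v)}).Adj x y := by
        rw [deleteEdges_adj]; exact ⟨h, by simpa using he⟩
      rcases ih with h1 | ⟨h2a, h2b⟩ | ⟨h3a, h3b⟩
      · exact Or.inl (h'.reachable.trans h1)
      · exact Or.inr (Or.inl ⟨h'.reachable.trans h2a, h2b⟩)
      · exact Or.inr (Or.inr ⟨h'.reachable.trans h3a, h3b⟩)

noncomputable local instance (G : SimpleGraph V) : Fintype G.ConnectedComponent := by
  classical infer_instance

private lemma card_cc_nonbridge {G : SimpleGraph V} {u v : V}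
    (huv : (G.deleteEdges {s(u,v)}).Reachable u v) :
    Nat.card (G.deleteEdges {s(u,v)}).ConnectedComponent = Nat.card G.ConnectedComponent := by
  apply Nat.card_eq_of_bijective
    (ConnectedComponent.map (Hom.ofLE (G.deleteEdges_le _)))
  constructor
  · intro c1 c2
    refine ConnectedComponent.ind (fun x => ConnectedComponent.ind (fun y => ?_) c2) c1
    simp only [ConnectedComponent.map_mk, Hom.ofLE_apply, ConnectedComponent.eq]
    intro hr
    obtain ⟨p⟩ := hr
    exact reach_del huv p
  · intro c
    refine ConnectedComponent.ind (fun x => ?_) c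
    exact ⟨(G.deleteEdges {s(u,v)}).connectedComponentMk x, by simp⟩

private lemma card_cc_bridge {G : SimpleGraph V} {u v : V} (hadj : G.Adj u v)
    (hb : ¬ (G.deleteEdges {s(u,v)}).Reachable u v) :
    Nat.card (G.deleteEdges {s(u,v)}).ConnectedComponent
      = Nat.card G.ConnectedComponent + 1 := by
  set G' := G.deleteEdges {s(u,v)} with hG'
  let f : G'.ConnectedComponent → G.ConnectedComponent :=
    ConnectedComponent.map (Hom.ofLE (G.deleteEdges_le _))
  have hfmk : ∀ x : V, f (G'.connectedComponentMk x) = G.connectedComponentMk x := by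
    intro x; simp [f]
  have hbij : Function.Bijective
      (fun c : {c : G'.ConnectedComponent // c ≠ G'.connectedComponentMk v} => f c.1) := by
    constructor
    · rintro ⟨c1, hc1⟩ ⟨c2, hc2⟩ hf
      refine Subtype.ext ?_
      revert hc1 hc2 hf
      refine ConnectedComponent.ind (fun x => ConnectedComponent.ind (fun y => ?_) c2) c1
      intro hc1 hc2 hf
      simp only [hfmk, ConnectedComponent.eq] at hf ⊢
      obtain ⟨p⟩ := hf
      rcases reach_split u v p with h1 | ⟨h2a, h2b⟩ | ⟨h3a, h3b⟩
      · exact h1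
      · exact absurd (ConnectedComponent.eq.mpr h2b.symm) hc2
      · exact absurd (ConnectedComponent.eq.mpr h3a) hc1
    · intro C
      refine ConnectedComponent.ind (fun w => ?_) C
      by_cases hw : G'.Reachable v w
      · refine ⟨⟨G'.connectedComponentMk u, ?_⟩, ?_⟩
        · simpa [ConnectedComponent.eq] using hb
        · simp only [hfmk, ConnectedComponent.eq]
          exact hadj.reachable.trans (hw.mono (G.deleteEdges_le _))
      · refine ⟨⟨G'.connectedComponentMk w, ?_⟩, hfmk w⟩
        simp only [ne_eq, ConnectedComponent.eq]
        exact fun hr => hw hr.symm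
  rw [Nat.card_eq_fintype_card, Nat.card_eq_fintype_card]
  exact card_eq_succ_of_bij _ _ hbij

private lemma edges_sub {G : SimpleGraph V} (t : Set (Sym2 V)) {a b : V}
    (c : (G.deleteEdges t).Walk a b) : ∀ e, e ∈ c.edges → e ∈ G.edgeSet :=
  fun e he => edgeSet_subset_edgeSet.2 (G.deleteEdges_le t) (c.edges_subset_edgeSet he)

private lemma isCycleSet_lift {G : SimpleGraph V} {t : Set (Sym2 V)} {s : Set (Sym2 V)}
    (hs : IsCycleSet (G.deleteEdges t) s) : IsCycleSet G s := by
  obtain ⟨w, c, hc, rfl⟩ := hs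
  exact ⟨w, c.transfer G (edges_sub t c), hc.transfer _, by
    simp [Walk.edges_transfer]⟩

private lemma cvd_del {G : SimpleGraph V} (h : CyclesVertexDisjoint G) (t : Set (Sym2 V)) :
    CyclesVertexDisjoint (G.deleteEdges t) := by
  intro a b c d hc hd hne
  have hd' := h (c.transfer G (edges_sub t c)) (d.transfer G (edges_sub t d))
    (hc.transfer _) (hd.transfer _)
    (by simpa [Walk.edges_transfer] using hne)
  simpa [Walk.support_transfer] using hd'

private lemma cycleSet_unique {G : SimpleGraph V} (h : CyclesVertexDisjoint G)
    {s1 s2 : Set (Sym2 V)} (h1 : IsCycleSet G s1) (h2 : IsCycleSet G s2) {e : Sym2 V}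
    (he1 : e ∈ s1) (he2 : e ∈ s2) : s1 = s2 := by
  obtain ⟨w1, c1, hc1, rfl⟩ := h1
  obtain ⟨w2, c2, hc2, rfl⟩ := h2
  by_contra hne
  have hdisj := h c1 c2 hc1 hc2 hne
  induction e using Sym2.ind with
  | _ x y =>
    exact Set.disjoint_left.mp hdisj (c1.fst_mem_support_of_mem_edges he1)
      (c2.fst_mem_support_of_mem_edges he2)

noncomputable local instance (G : SimpleGraph V) :
    Fintype {s : Set (Sym2 V) // IsCycleSet G s} := by
  classical infer_instance

private lemma card_cycles_bridge {G : SimpleGraph V} {u v : V} (hadj : G.Adj u v)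
    (hb : ¬ (G.deleteEdges {s(u,v)}).Reachable u v) :
    Nat.card {s : Set (Sym2 V) // IsCycleSet (G.deleteEdges {s(u,v)}) s}
      = Nat.card {s : Set (Sym2 V) // IsCycleSet G s} := by
  have hbr : G.IsBridge s(u, v) := isBridge_iff.mpr hb
  have hnc := (isBridge_iff_adj_and_forall_cycle_notMem (G.mem_edgeSet.mpr hadj)).mp hbr
  refine Nat.card_congr (Equiv.subtypeEquivRight (fun s => ⟨isCycleSet_lift, ?_⟩))
  rintro ⟨w, c, hc, rfl⟩
  have hno : ∀ e, e ∈ c.edges → e ∉ ({s(u,v)} : Set (Sym2 V)) := by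
    intro e he hmem
    rw [Set.mem_singleton_iff] at hmem
    subst hmem
    exact hnc c hc he
  exact ⟨w, c.toDeleteEdges _ hno, hc.toDeleteEdges _ _ hno, by
    simp [Walk.toDeleteEdges, Walk.edges_transfer]⟩

private lemma card_cycles_nonbridge {G : SimpleGraph V} (h : CyclesVertexDisjoint G)
    {u v w0 : V} {c0 : G.Walk w0 w0} (hc0 : c0.IsCycle) (he0 : s(u,v) ∈ c0.edges) :
    Nat.card {s : Set (Sym2 V) // IsCycleSet G s}
      = Nat.card {s : Set (Sym2 V) // IsCycleSet (G.deleteEdges {s(u,v)}) s} + 1 := by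
  set G' := G.deleteEdges {s(u,v)} with hG'
  have hs0 : IsCycleSet G {e | e ∈ c0.edges} := ⟨w0, c0, hc0, rfl⟩
  set a₀ : {s : Set (Sym2 V) // IsCycleSet G s} := ⟨{e | e ∈ c0.edges}, hs0⟩ with ha₀
  have key : ∀ a : {s : Set (Sym2 V) // IsCycleSet G s}, a ≠ a₀ → IsCycleSet G' a.1 := by
    rintro ⟨s, hs⟩ hne
    have hsne : s ≠ {e | e ∈ c0.edges} := fun hh => hne (Subtype.ext hh)
    obtain ⟨w, c, hc, rfl⟩ := hs
    have hemem : s(u,v) ∉ c.edges := by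
      intro hin
      exact hsne (cycleSet_unique h ⟨w, c, hc, rfl⟩ hs0 hin he0)
    have hno : ∀ e, e ∈ c.edges → e ∉ ({s(u,v)} : Set (Sym2 V)) := by
      intro e he hmem
      rw [Set.mem_singleton_iff] at hmem
      subst hmem
      exact hemem he
    exact ⟨w, c.toDeleteEdges _ hno, hc.toDeleteEdges _ _ hno, by
      exact (congrArg (fun l => {e : Sym2 V | e ∈ l}) (Walk.edges_transfer _ _)).symm⟩
  have hbij : Function.Bijective
      (fun a : {a : {s : Set (Sym2 V) // IsCycleSet G s} // a ≠ a₀} =>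
        (⟨a.1.1, key a.1 a.2⟩ : {s : Set (Sym2 V) // IsCycleSet G' s})) := by
    constructor
    · rintro ⟨⟨s1, h1⟩, hn1⟩ ⟨⟨s2, h2⟩, hn2⟩ hf
      simp only [Subtype.mk_eq_mk] at hf
      exact Subtype.ext (Subtype.ext hf)
    · rintro ⟨s, hs⟩
      have hnot : s(u,v) ∉ s := by
        obtain ⟨w, c, hc, rfl⟩ := hs
        intro hin
        have := c.edges_subset_edgeSet hin
        rw [hG', edgeSet_deleteEdges] at this
        exact this.2 rfl
      have hne : (⟨s, isCycleSet_lift hs⟩ : {s : Set (Sym2 V) // IsCycleSet G s}) ≠ a₀ := by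
        intro hh
        apply hnot
        have : s = {e | e ∈ c0.edges} := congrArg Subtype.val hh
        rw [this]
        exact he0
      exact ⟨⟨⟨s, isCycleSet_lift hs⟩, hne⟩, rfl⟩
  rw [Nat.card_eq_fintype_card, Nat.card_eq_fintype_card]
  exact card_eq_succ_of_bij _ _ hbij

end ThetaHelpers

theorem stmt11 (G : SimpleGraph V) (h : CyclesVertexDisjoint G) :
    theta G = (Nat.card {s : Set (Sym2 V) // IsCycleSet G s} : ℤ) := by
  classical
  suffices H : ∀ (n : ℕ) (G : SimpleGraph V), CyclesVertexDisjoint G → G.edgeSet.ncard = n →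
      theta G = (Nat.card {s : Set (Sym2 V) // IsCycleSet G s} : ℤ) from H _ G h rfl
  intro n
  induction n using Nat.strong_induction_on with
  | _ n ih =>
    intro G hG hn
    by_cases hE : G.edgeSet.Nonempty
    · obtain ⟨e, he⟩ := hE
      revert he
      refine Sym2.ind (fun u v => ?_) e
      intro he
      have hadj : G.Adj u v := (G.mem_edgeSet).mp he
      set G' := G.deleteEdges {s(u,v)} with hG'
      have hG'd : CyclesVertexDisjoint G' := cvd_del hG _
      have hEfin : G.edgeSet.Finite := Set.toFinite _
      have hpos : 1 ≤ n := by
        rw [← hn]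
        exact (Set.ncard_pos hEfin).mpr ⟨_, he⟩
      have hcard' : G'.edgeSet.ncard = n - 1 := by
        rw [hG', SimpleGraph.edgeSet_deleteEdges,
          Set.ncard_diff_singleton_of_mem he, hn]
      have IH := ih (n - 1) (by omega) G' hG'd hcard'
      have hE1 : (G.edgeSet.ncard : ℤ) = (G'.edgeSet.ncard : ℤ) + 1 := by
        rw [hcard', hn]
        omega
      by_cases hreach : G'.Reachable u v
      · obtain ⟨w0, c0, hc0, he0⟩ :=
          (SimpleGraph.adj_and_reachable_delete_edges_iff_exists_cycle).mp ⟨hadj, hreach⟩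
        have hcc := card_cc_nonbridge hreach
        have hcyc := card_cycles_nonbridge hG hc0 he0
        rw [← hG'] at hcc hcyc
        simp only [theta] at IH ⊢
        omega
      · have hcc := card_cc_bridge hadj hreach
        have hcyc := card_cycles_bridge hadj hreach
        rw [← hG'] at hcc hcyc
        simp only [theta] at IH ⊢
        omega
    · rw [Set.not_nonempty_iff_eq_empty] at hE
      have hbot : G = ⊥ := SimpleGraph.edgeSet_eq_empty.mp hE
      subst hbot
      have hcc : Nat.card (⊥ : SimpleGraph V).ConnectedComponent = Fintype.card V := by
        rw [← Nat.card_eq_fintype_card]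
        refine (Nat.card_eq_of_bijective (SimpleGraph.connectedComponentMk _) ⟨?_, ?_⟩).symm
        · intro x y hxy
          exact SimpleGraph.reachable_bot.mp (SimpleGraph.ConnectedComponent.eq.mp hxy)
        · exact fun c => SimpleGraph.ConnectedComponent.ind (fun x => ⟨x, rfl⟩) c
      have hempty : IsEmpty {s : Set (Sym2 V) // IsCycleSet (⊥ : SimpleGraph V) s} := by
        constructor
        rintro ⟨s, w, c, hc, rfl⟩
        cases c with
        | nil => exact hc.ne_nil rfl
        | cons hadj p => exact hadj
      have hzero : Nat.card {s : Set (Sym2 V) // IsCycleSet (⊥ : SimpleGraph V) s} = 0 :=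
        Nat.card_of_isEmpty
      simp only [theta, hzero, SimpleGraph.edgeSet_bot, Set.ncard_empty, hcc]
      omega
end

section
/- Let Φ = (G, φ) be a T-gain graph with underlying simple graph G. Then r(G) - 2θ(G) ≤ r(Φ) ≤ r(G) + 2θ(G), where r(Φ) = rank(A(Φ)), r(G) = rank(A(G)), and θ(G) = |E(G)| - |V(G)| + ω(G). -/
open Matrix
open scoped Classical

variable {V : Type*} [Fintype V] [DecidableEq V]

set_option linter.unusedSectionVars false

section StmtAuxRank
namespace StmtAux
variable {V : Type*} [Fintype V] [DecidableEq V]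


lemma rank_add_le (A B : Matrix V V ℂ) : (A + B).rank ≤ A.rank + B.rank := by
  have h : LinearMap.range (A + B).mulVecLin ≤
      LinearMap.range A.mulVecLin ⊔ LinearMap.range B.mulVecLin := by
    rintro x ⟨v, rfl⟩
    rw [Matrix.mulVecLin_add]
    exact Submodule.add_mem_sup ⟨v, rfl⟩ ⟨v, rfl⟩
  exact le_trans (Submodule.finrank_mono h)
    (Submodule.finrank_add_le_finrank_add_finrank _ _)

lemma rank_neg (A : Matrix V V ℂ) : (-A).rank = A.rank := by
  have : -A = A * Matrix.diagonal (fun _ => (-1 : ℂ)) := by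
    ext i j; simp [Matrix.mul_apply, Matrix.diagonal]
  rw [this, Matrix.rank_mul_eq_left_of_isUnit_det]
  simp [Matrix.det_diagonal]

lemma rank_stdBasisMatrix_le (i j : V) (c : ℂ) : (Matrix.single i j c).rank ≤ 1 := by
  have h : Matrix.single i j c = Matrix.vecMulVec (Pi.single i c) (Pi.single j 1) := by
    ext a b
    simp only [Matrix.single, Matrix.vecMulVec, Matrix.of_apply, Pi.single_apply]
    by_cases ha : i = a <;> by_cases hb : j = b <;> simp [ha, hb, eq_comm]
  rw [h, Matrix.vecMulVec_eq Unit]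
  refine le_trans (Matrix.rank_mul_le_left _ _) ?_
  simpa using Matrix.rank_le_card_width (Matrix.replicateCol Unit (Pi.single i c))








lemma rank_sum_le {α : Type*} (T : Finset α) (F : α → Matrix V V ℂ) :
    (∑ e ∈ T, F e).rank ≤ ∑ e ∈ T, (F e).rank := by
  classical
  induction T using Finset.induction with
  | empty => simp [Matrix.rank_zero]
  | insert _ _ h ih =>
    rw [Finset.sum_insert h, Finset.sum_insert h]
    exact le_trans (rank_add_le _ _) (by omega)

lemma rank_edge_le (M : Matrix V V ℂ) (a b : V) :
    Matrix.rank (Matrix.of fun i j => if s(i, j) = s(a, b) then M i j else 0) ≤ 2 := by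
  have h : (Matrix.of fun i j => if s(i, j) = s(a, b) then M i j else 0)
      = Matrix.single a b (M a b)
        + Matrix.single b a (if b = a then 0 else M b a) := by
    ext i j
    simp only [Matrix.of_apply, Matrix.add_apply, Matrix.single, Sym2.eq_iff]
    by_cases hia : a = i <;> by_cases hjb : b = j <;> by_cases hib : b = i <;>
      by_cases hja : a = j <;> subst_vars <;> simp_all <;> aesop
  rw [h]
  have := rank_add_le (Matrix.single a b (M a b))
    (Matrix.single b a (if b = a then 0 else M b a))
  have h1 := rank_stdBasisMatrix_le a b (M a b)
  have h2 := rank_stdBasisMatrix_le b a (if b = a then 0 else M b a)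
  omega

lemma rank_le_two_mul (M : Matrix V V ℂ) (T : Finset (Sym2 V))
    (hsupp : ∀ i j, M i j ≠ 0 → s(i, j) ∈ T) : M.rank ≤ 2 * T.card := by
  classical
  have hM : M = ∑ e ∈ T, Matrix.of (fun i j => if s(i, j) = e then M i j else 0) := by
    ext i j
    rw [Matrix.sum_apply]
    simp only [Matrix.of_apply]
    rw [Finset.sum_ite_eq T (s(i, j)) (fun _ => M i j)]
    by_cases h : s(i, j) ∈ T
    · simp [h]
    · simp only [h, if_false]
      by_contra hne
      exact h (hsupp i j hne)
  rw [hM]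
  refine le_trans (rank_sum_le _ _) ?_
  rw [Finset.card_eq_sum_ones T, Finset.mul_sum]
  refine Finset.sum_le_sum ?_
  intro e he
  induction e using Sym2.ind with
  | _ a b => simpa using rank_edge_le M a b



end StmtAux
end StmtAuxRank

section StmtAuxGraph
open SimpleGraph
namespace StmtAux
variable {V : Type*} [Fintype V] [DecidableEq V] (G : SimpleGraph V)

noncomputable def root (v : V) : V := Quot.out (G.connectedComponentMk v)

lemma mk_root (v : V) : G.connectedComponentMk (root G v) = G.connectedComponentMk v :=
  (G.connectedComponentMk v).out_eq

lemma reachable_root (v : V) : G.Reachable (root G v) v :=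
  ConnectedComponent.eq.mp (mk_root G v)

lemma root_eq_of_adj {u v : V} (h : G.Adj u v) : root G u = root G v := by
  unfold root
  rw [ConnectedComponent.sound h.reachable]

noncomputable def dd (v : V) : ℕ := G.dist (root G v) v

lemma dd_eq_zero_iff (v : V) : dd G v = 0 ↔ root G v = v :=
  (reachable_root G v).dist_eq_zero_iff

lemma exists_parent (v : V) (h : dd G v ≠ 0) :
    ∃ u, G.Adj u v ∧ dd G u = dd G v - 1 := by
  obtain ⟨w, hw⟩ := (reachable_root G v).exists_walk_length_eq_dist
  have hne : v ≠ root G v := by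
    intro he
    exact h (by simp [dd, ← he])
  obtain ⟨u, hadj, p, hp⟩ := Walk.exists_eq_cons_of_ne hne w.reverse
  have hroot : root G u = root G v := root_eq_of_adj G (hadj.symm)
  have hlen : dd G v = p.length + 1 := by
    have h1 : w.reverse.length = (Walk.cons hadj p).length := by rw [hp]
    rw [Walk.length_reverse, hw, Walk.length_cons] at h1
    exact h1
  refine ⟨u, hadj.symm, ?_⟩
  have hle : dd G u ≤ p.length := by
    have h2 := SimpleGraph.dist_le p.reverse
    rw [Walk.length_reverse] at h2
    rw [dd, hroot]
    exact h2
  have hge : dd G v ≤ dd G u + 1 := by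
    obtain ⟨q, hq⟩ := (reachable_root G u).exists_walk_length_eq_dist
    have h3 := SimpleGraph.dist_le ((q.copy hroot rfl).concat hadj.symm)
    rw [Walk.length_concat, Walk.length_copy, hq] at h3
    exact h3
  omega

noncomputable def parent (v : V) : V :=
  if h : dd G v ≠ 0 then (exists_parent G v h).choose else v

lemma parent_adj {v : V} (h : dd G v ≠ 0) : G.Adj (parent G v) v := by
  rw [parent, dif_pos h]
  exact (exists_parent G v h).choose_spec.1

lemma parent_dd {v : V} (h : dd G v ≠ 0) : dd G (parent G v) = dd G v - 1 := by
  rw [parent, dif_pos h]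
  exact (exists_parent G v h).choose_spec.2

end StmtAux
end StmtAuxGraph

namespace StmtAux
variable {V : Type*} [Fintype V] [DecidableEq V]

noncomputable def gseq (Φ : GainGraph V) : ℕ → V → ℂ
  | 0, _ => 1
  | (n+1), v =>
    if dd Φ.G v = n + 1 then Φ.gain (parent Φ.G v) v * gseq Φ n (parent Φ.G v)
    else gseq Φ n v

noncomputable def pot (Φ : GainGraph V) (v : V) : ℂ := gseq Φ (dd Φ.G v) v

lemma gseq_eq_pot (Φ : GainGraph V) : ∀ n v, dd Φ.G v ≤ n → gseq Φ n v = pot Φ v := by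
  intro n
  induction n with
  | zero => intro v hv; rw [pot, Nat.le_zero.mp hv]
  | succ n ih =>
    intro v hv
    by_cases h : dd Φ.G v = n + 1
    · rw [pot, h]
    · rw [gseq, if_neg h]
      exact ih v (by omega)

lemma pot_parent (Φ : GainGraph V) {v : V} (h : dd Φ.G v ≠ 0) :
    pot Φ v = Φ.gain (parent Φ.G v) v * pot Φ (parent Φ.G v) := by
  obtain ⟨n, hn⟩ : ∃ n, dd Φ.G v = n + 1 := ⟨dd Φ.G v - 1, by omega⟩
  have hp : dd Φ.G (parent Φ.G v) ≤ n := by rw [parent_dd Φ.G h, hn]; omega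
  rw [pot, hn, gseq, if_pos hn, gseq_eq_pot Φ n _ hp]

lemma abs_pot (Φ : GainGraph V) (v : V) : ‖pot Φ v‖ = 1 := by
  have key : ∀ n v, dd Φ.G v ≤ n → ‖pot Φ v‖ = 1 := by
    intro n
    induction n with
    | zero =>
      intro v hv
      rw [pot, Nat.le_zero.mp hv]
      simp [gseq]
    | succ n ih =>
      intro v hv
      by_cases h : dd Φ.G v = n + 1
      · rw [pot_parent Φ (by omega), norm_mul,
          Φ.gain_unit _ _ (parent_adj Φ.G (by omega)),
          ih _ (by rw [parent_dd Φ.G (by omega)]; omega), one_mul]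
      · exact ih v (by omega)
  exact key (dd Φ.G v) v le_rfl

end StmtAux

theorem stmt12 (Φ : GainGraph V) :
    (grank Φ.G : ℤ) - 2 * theta Φ.G ≤ (Φ.A.rank : ℤ) ∧
    (Φ.A.rank : ℤ) ≤ (grank Φ.G : ℤ) + 2 * theta Φ.G := by
  classical
  set G := Φ.G with hG
  set f : V → ℂ := StmtAux.pot Φ with hf
  have habs : ∀ v, ‖f v‖ = 1 := StmtAux.abs_pot Φ
  have hfne : ∀ v, f v ≠ 0 := by
    intro v h0
    simpa [h0] using habs v
  have hconjf : ∀ v, starRingEnd ℂ (f v) * f v = 1 := by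
    intro v
    rw [mul_comm, Complex.mul_conj]
    rw [Complex.normSq_eq_norm_sq, habs]
    norm_num
  set N : Matrix V V ℂ :=
    Matrix.diagonal (fun v => starRingEnd ℂ (f v)) * G.adjMatrix ℂ * Matrix.diagonal f with hN
  have hNentry : ∀ i j, N i j = starRingEnd ℂ (f i) * (G.adjMatrix ℂ) i j * f j := by
    intro i j
    rw [hN, Matrix.mul_diagonal, Matrix.diagonal_mul]
  have hrankN : N.rank = grank G := by
    rw [hN, Matrix.rank_mul_eq_left_of_isUnit_det, Matrix.rank_mul_eq_right_of_isUnit_det, grank]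
    · rw [Matrix.det_diagonal]
      rw [isUnit_iff_ne_zero, Finset.prod_ne_zero_iff]
      intro v _
      simp [hfne v]
    · rw [Matrix.det_diagonal]
      rw [isUnit_iff_ne_zero, Finset.prod_ne_zero_iff]
      exact fun v _ => hfne v
  set M : Matrix V V ℂ := Φ.A - N with hM
  -- the parent edges are killed
  have hMparent : ∀ w, StmtAux.dd G w ≠ 0 →
      M (StmtAux.parent G w) w = 0 ∧ M w (StmtAux.parent G w) = 0 := by
    intro w hw
    set u := StmtAux.parent G w with hu
    have hadj : G.Adj u w := StmtAux.parent_adj G hw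
    have hfw : f w = Φ.gain u w * f u := StmtAux.pot_parent Φ hw
    have hNuw : N u w = Φ.gain u w := by
      rw [hNentry, SimpleGraph.adjMatrix_apply, if_pos hadj, hfw]
      calc starRingEnd ℂ (f u) * 1 * (Φ.gain u w * f u)
          = (starRingEnd ℂ (f u) * f u) * Φ.gain u w := by ring
        _ = Φ.gain u w := by rw [hconjf u, one_mul]
    have hNwu : N w u = Φ.gain w u := by
      rw [hNentry, SimpleGraph.adjMatrix_apply, if_pos hadj.symm, hfw]
      rw [Φ.gain_conj u w]
      calc starRingEnd ℂ (Φ.gain u w * f u) * 1 * f u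
          = starRingEnd ℂ (Φ.gain u w) * (starRingEnd ℂ (f u) * f u) := by
            rw [_root_.map_mul]; ring
        _ = starRingEnd ℂ (Φ.gain u w) := by rw [hconjf u, mul_one]
    constructor
    · rw [hM, Matrix.sub_apply, hNuw, GainGraph.A]
      rw [if_pos (show Φ.G.Adj u w from hadj)]
      ring
    · rw [hM, Matrix.sub_apply, hNwu, GainGraph.A]
      rw [if_pos (show Φ.G.Adj w u from hadj.symm)]
      ring
  set P : Finset (Sym2 V) :=
    (Finset.univ.filter (fun v => StmtAux.dd G v ≠ 0)).image
      (fun v => s(StmtAux.parent G v, v)) with hP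
  set S : Finset (Sym2 V) := G.edgeFinset \ P with hS
  have hMherm : ∀ i j, M i j = 0 → M j i = 0 := by
    intro i j hij
    have h1 : M j i = starRingEnd ℂ (M i j) := by
      rw [hM, Matrix.sub_apply, Matrix.sub_apply, map_sub]
      congr 1
      · rw [show Φ.A j i = Φ.Aᴴ j i from (congrFun (congrFun Φ.isHermitian j) i).symm,
          Matrix.conjTranspose_apply]
        rfl
      · rw [hNentry, hNentry, _root_.map_mul, _root_.map_mul]
        rw [SimpleGraph.adjMatrix_apply, SimpleGraph.adjMatrix_apply]
        by_cases h : G.Adj i j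
        · rw [if_pos h, if_pos h.symm]
          rw [_root_.map_one, Complex.conj_conj]
          ring
        · rw [if_neg h, if_neg (fun hh => h hh.symm)]
          simp
    rw [h1, hij, map_zero]
  have hsupp : ∀ i j, M i j ≠ 0 → s(i, j) ∈ S := by
    intro i j hij
    have hadj : G.Adj i j := by
      by_contra hna
      apply hij
      rw [hM, Matrix.sub_apply, hNentry, GainGraph.A,
        SimpleGraph.adjMatrix_apply, if_neg (show ¬ Φ.G.Adj i j from hna), if_neg hna]
      ring
    have hnP : s(i, j) ∉ P := by
      intro hmem
      rw [hP, Finset.mem_image] at hmem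
      obtain ⟨w, hw, hsw⟩ := hmem
      rw [Finset.mem_filter] at hw
      have hw0 : StmtAux.dd G w ≠ 0 := hw.2
      rw [Sym2.eq_iff] at hsw
      rcases hsw with ⟨h1, h2⟩ | ⟨h1, h2⟩
      · rw [← h1, ← h2] at hij
        exact hij (hMparent w hw0).1
      · rw [← h1, ← h2] at hij
        exact hij (hMparent w hw0).2
    rw [hS, Finset.mem_sdiff]
    exact ⟨by rwa [SimpleGraph.mem_edgeFinset, SimpleGraph.mem_edgeSet], hnP⟩
  have hrankM : M.rank ≤ 2 * S.card := StmtAux.rank_le_two_mul M S hsupp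
  -- counting
  have hPsub : P ⊆ G.edgeFinset := by
    intro e he
    rw [hP, Finset.mem_image] at he
    obtain ⟨w, hw, rfl⟩ := he
    rw [Finset.mem_filter] at hw
    rw [SimpleGraph.mem_edgeFinset]
    exact (StmtAux.parent_adj G hw.2)
  have hPcard : P.card = (Finset.univ.filter (fun v => StmtAux.dd G v ≠ 0)).card := by
    rw [hP]
    apply Finset.card_image_of_injOn
    intro v hv w hw hvw
    rw [Finset.mem_coe, Finset.mem_filter] at hv hw
    simp only [Sym2.eq_iff] at hvw
    rcases hvw with ⟨h1, h2⟩ | ⟨h1, h2⟩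
    · exact h2
    · exfalso
      have d1 := StmtAux.parent_dd G hv.2
      have d2 := StmtAux.parent_dd G hw.2
      rw [h1] at d1
      rw [← h2] at d2
      have := hv.2
      have := hw.2
      omega
  have hScard : S.card = G.edgeFinset.card - P.card := Finset.card_sdiff_of_subset hPsub
  have hPle : P.card ≤ G.edgeFinset.card := Finset.card_le_card hPsub
  have hroots : (Finset.univ.filter (fun v => StmtAux.dd G v = 0)).card
      = Nat.card G.ConnectedComponent := by
    have e : {v : V // StmtAux.dd G v = 0} ≃ G.ConnectedComponent :=
      { toFun := fun v => G.connectedComponentMk v.1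
        invFun := fun c => ⟨Quot.out c, by
          rw [StmtAux.dd_eq_zero_iff] at *
          show StmtAux.root G (Quot.out c) = Quot.out c
          rw [StmtAux.root]
          congr 1
          exact c.out_eq⟩
        left_inv := fun v => by
          apply Subtype.ext
          exact (StmtAux.dd_eq_zero_iff G v.1).mp v.2
        right_inv := fun c => c.out_eq }
    rw [← Nat.card_congr e, Nat.card_eq_fintype_card, Fintype.card_subtype]
  have hsplit : (Finset.univ.filter (fun v => StmtAux.dd G v = 0)).card
      + (Finset.univ.filter (fun v => StmtAux.dd G v ≠ 0)).card = Fintype.card V := by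
    have := Finset.card_filter_add_card_filter_not
      (s := (Finset.univ : Finset V)) (p := fun v => StmtAux.dd G v = 0)
    simpa [Finset.card_univ] using this
  have hm : G.edgeSet.ncard = G.edgeFinset.card := by
    rw [Set.ncard_eq_toFinset_card']
    congr 1
  have h1 : Φ.A.rank ≤ N.rank + M.rank := by
    have hAe : Φ.A = N + M := by rw [hM]; abel
    rw [hAe]
    exact StmtAux.rank_add_le N M
  have h2 : N.rank ≤ Φ.A.rank + M.rank := by
    have hNe : N = Φ.A + (-M) := by rw [hM]; abel
    rw [hNe]
    refine le_trans (StmtAux.rank_add_le _ _) ?_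
    rw [StmtAux.rank_neg]
  rw [theta, hm, ← hroots, ← hrankN]
  constructor <;> omega
end
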